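/- A finite commutative ring R is a field if and only if its nil clean divisor graph contains no 3-cycle (equivalently, is triangle-free), assuming |R| > 2. -/

import Mathlib

def IsNilCleanElem {R : Type*} [CommRing R] (x : R) : Prop :=
  ∃ e n : R, IsIdempotentElem e ∧ IsNilpotent n ∧ x = e + n

def NCVertex {R : Type*} [CommRing R] (x : R) : Prop :=
  x ≠ 0 ∧ ∃ y : R, y ≠ 0 ∧ y ≠ x ∧ IsNilCleanElem (x * y)

def NCAdj {R : Type*} [CommRing R] (x y : R) : Prop :=
  x ≠ y ∧ NCVertex x ∧ NCVertex y ∧ IsNilCleanElem (x * y)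

lemma nc_of_idem {R : Type*} [CommRing R] {x : R} (h : IsIdempotentElem x) :
    IsNilCleanElem x := ⟨x, 0, h, IsNilpotent.zero, by ring⟩

lemma nc_of_nilp {R : Type*} [CommRing R] {x : R} (h : IsNilpotent x) :
    IsNilCleanElem x := ⟨0, x, IsIdempotentElem.zero, h, by ring⟩

lemma nc_one_add {R : Type*} [CommRing R] {x : R} (h : IsNilpotent x) :
    IsNilCleanElem (1 + x) := ⟨1, x, IsIdempotentElem.one, h, rfl⟩

/-- In a finite monoid, some positive power of any element is idempotent. -/
lemma exists_pow_idem {M : Type*} [Monoid M] [Finite M] (a : M) :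
    ∃ m : ℕ, 0 < m ∧ IsIdempotentElem (a ^ m) := by
  obtain ⟨i, j, hij, h⟩ := Finite.exists_ne_map_eq_of_infinite (fun n : ℕ => a ^ n)
  wlog hlt : i < j generalizing i j
  · exact this j i hij.symm h.symm (by omega)
  set d := j - i with hd
  have hd1 : 1 ≤ d := by omega
  have step : ∀ k, i ≤ k → a ^ (k + d) = a ^ k := by
    intro k hk
    have : a ^ (k + d) = a ^ (k - i) * a ^ j := by
      rw [← pow_add]; congr 1; omega
    rw [this, ← h, ← pow_add]
    congr 1; omega
  have key : ∀ t k, i ≤ k → a ^ (k + t * d) = a ^ k := by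
    intro t
    induction t with
    | zero => simp
    | succ n ih =>
      intro k hk
      have : k + (n + 1) * d = (k + d) + n * d := by ring
      rw [this, ih (k + d) (by omega), step k hk]
  refine ⟨(i + 1) * d, by positivity, ?_⟩
  show a ^ ((i + 1) * d) * a ^ ((i + 1) * d) = a ^ ((i + 1) * d)
  rw [← pow_add]
  exact key (i + 1) ((i + 1) * d) (by nlinarith)

theorem stmt9 {R : Type*} [CommRing R] [Fintype R] [Nontrivial R]
    (hcard : 2 < Fintype.card R) :
    IsField R ↔
      ¬ ∃ x y z : R, NCAdj x y ∧ NCAdj y z ∧ NCAdj x z := by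
  constructor
  · rintro hF ⟨x, y, z, ⟨hxy, hx, hy, nxy⟩, ⟨hyz, _, hz, nyz⟩, ⟨hxz, _, _, _⟩⟩
    letI := hF.toField
    have nc01 : ∀ w : R, IsNilCleanElem w → w = 0 ∨ w = 1 := by
      rintro w ⟨e, n, he, hn, rfl⟩
      have hn0 : n = 0 := hn.eq_zero
      have hee : e * e = e := he
      have : e * (e - 1) = 0 := by linear_combination hee
      rcases mul_eq_zero.mp this with h | h
      · left; simp [hn0, h]
      · right; rw [hn0, add_zero, sub_eq_zero.mp h]
    have hxy1 : x * y = 1 := by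
      rcases nc01 _ nxy with h | h
      · rcases mul_eq_zero.mp h with h | h
        · exact absurd h hx.1
        · exact absurd h hy.1
      · exact h
    have hyz1 : y * z = 1 := by
      rcases nc01 _ nyz with h | h
      · rcases mul_eq_zero.mp h with h | h
        · exact absurd h hy.1
        · exact absurd h hz.1
      · exact h
    apply hxz
    calc x = x * (y * z) := by rw [hyz1, mul_one]
    _ = (x * y) * z := by ring
    _ = z := by rw [hxy1, one_mul]
  · intro hno
    by_contra hF
    apply hno
    -- R is not a field: get a nonzero nonunit
    have : ∃ a : R, a ≠ 0 ∧ ¬ IsUnit a := by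
      by_contra h
      push_neg at h
      apply hF
      refine ⟨exists_pair_ne R, mul_comm, ?_⟩
      intro a ha
      obtain ⟨u, hu⟩ := h a ha
      exact ⟨u.inv, by rw [← hu]; exact u.mul_inv⟩
    obtain ⟨a, ha0, hau⟩ := this
    by_cases hnil : IsNilpotent a
    · -- triangle (a, 1, 1+a)
      have ha1 : a ≠ 1 := fun h => hau (h ▸ isUnit_one)
      have h1a0 : (1 : R) + a ≠ 0 := by
        intro h
        have : a = -1 := by linear_combination h
        exact hau (this ▸ (isUnit_one.neg))
      have h1a1 : (1 : R) + a ≠ 1 := by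
        intro h; exact ha0 (by linear_combination h)
      have h1aa : (1 : R) + a ≠ a := by
        intro h
        exact one_ne_zero (by linear_combination h : (1 : R) = 0)
      have va : NCVertex a := ⟨ha0, 1, one_ne_zero, Ne.symm ha1, by
        rw [mul_one]; exact nc_of_nilp hnil⟩
      have v1 : NCVertex (1 : R) := ⟨one_ne_zero, a, ha0, ha1, by
        rw [one_mul]; exact nc_of_nilp hnil⟩
      have v1a : NCVertex ((1 : R) + a) := ⟨h1a0, 1, one_ne_zero, Ne.symm h1a1, by
        rw [mul_one]; exact nc_one_add hnil⟩
      refine ⟨a, 1, 1 + a, ⟨ha1, va, v1, by rw [mul_one]; exact nc_of_nilp hnil⟩,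
        ⟨Ne.symm h1a1, v1, v1a, by rw [one_mul]; exact nc_one_add hnil⟩,
        ⟨Ne.symm h1aa, va, v1a, nc_of_nilp ?_⟩⟩
      exact (Commute.all a (1 + a)).isNilpotent_mul_right hnil
    · -- a not nilpotent: get nontrivial idempotent e = a^m
      obtain ⟨m, hm, hidem⟩ := exists_pow_idem a
      set e := a ^ m with he
      have he0 : e ≠ 0 := fun h => hnil ⟨m, h⟩
      have he1 : e ≠ 1 := by
        intro h
        apply hau
        refine IsUnit.of_mul_eq_one (a := a) (a ^ (m - 1)) ?_
        have h2 : a * a ^ (m - 1) = a ^ m := by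
          rw [← pow_succ']; congr 1; omega
        rw [h2, ← he, h]
      -- triangle (e, 1 - e, 1)
      have h1e0 : (1 : R) - e ≠ 0 := fun h => he1 (by linear_combination -h)
      have h1ee : (1 : R) - e ≠ e := by
        intro h
        have h2e : (2 : R) * e = 1 := by linear_combination -h
        have hee : e * e = e := hidem
        exact one_ne_zero (by linear_combination (2*e - 1) * h2e - 4 * hee : (1:R) = 0)
      have h1e1 : (1 : R) - e ≠ 1 := fun h => he0 (by linear_combination -h)
      have hprod : e * (1 - e) = 0 := by
        have := hidem; unfold IsIdempotentElem at this; linear_combination -this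
      have ve : NCVertex e := ⟨he0, 1 - e, h1e0, h1ee, by
        rw [hprod]; exact nc_of_nilp IsNilpotent.zero⟩
      have v1e : NCVertex (1 - e) := ⟨h1e0, e, he0, Ne.symm h1ee, by
        rw [mul_comm, hprod]; exact nc_of_nilp IsNilpotent.zero⟩
      have v1 : NCVertex (1 : R) := ⟨one_ne_zero, e, he0, he1, by
        rw [one_mul]; exact nc_of_idem hidem⟩
      refine ⟨e, 1 - e, 1, ⟨Ne.symm h1ee, ve, v1e, by
          rw [hprod]; exact nc_of_nilp IsNilpotent.zero⟩,
        ⟨h1e1, v1e, v1, by rw [mul_one]; exact nc_of_idem hidem.one_sub⟩,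
        ⟨he1, ve, v1, by rw [mul_one]; exact nc_of_idem hidem⟩⟩
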